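/- For a finite set M of Hermitian Pauli operators generating a group ⟨M⟩ in which every element squares to ±I and which contains no element equal to -I times another of its elements up to phase issues (i.e., viewing the phaseless group), the composition of projection channels satisfies ∘_{P ∈ M} Π_P (ρ) = (1/|⟨M⟩|) Σ_{Q ∈ ⟨M⟩} Q ρ Q†, where ⟨M⟩ is the group generated by M modulo phases. -/

import Mathlib

open Matrix

/-- The Pauli projection channel `Π_P(ρ) = (1/2)ρ + (1/2) P ρ P†`. -/
noncomputable def pauliProj {m : Type*} [Fintype m] [DecidableEq m]
    (P ρ : Matrix m m ℂ) : Matrix m m ℂ :=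
  (1/2 : ℂ) • ρ + (1/2 : ℂ) • (P * ρ * Pᴴ)

/-- Signed subset product of the generators, indexed by a `ZMod 2` vector. -/
noncomputable def gP {d k : ℕ} (s : Fin k → Matrix (Fin d) (Fin d) ℂ)
    (v : Fin k → ZMod 2) : Matrix (Fin d) (Fin d) ℂ :=
  (List.ofFn fun i => s i ^ (v i).val).prod

lemma sumZMod2 {β : Type*} [AddCommMonoid β] (h : ZMod 2 → β) :
    ∑ b : ZMod 2, h b = h 0 + h 1 := by
  rw [show (Finset.univ : Finset (ZMod 2)) = {0, 1} from by decide]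
  simp

lemma gP_cons {d k : ℕ} (s : Fin (k+1) → Matrix (Fin d) (Fin d) ℂ)
    (b : ZMod 2) (w : Fin k → ZMod 2) :
    gP s (Fin.cons b w) = s 0 ^ b.val * gP (fun i => s i.succ) w := by
  simp [gP, List.ofFn_succ]

lemma step1 {d : ℕ} (k : ℕ) (s : Fin k → Matrix (Fin d) (Fin d) ℂ)
    (ρ : Matrix (Fin d) (Fin d) ℂ) :
    (List.ofFn s).foldr (fun P σ => pauliProj P σ) ρ
      = ((2:ℂ)^k)⁻¹ • ∑ v : Fin k → ZMod 2, gP s v * ρ * (gP s v)ᴴ := by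
  induction k with
  | zero => simp [gP, pauliProj]
  | succ k IH =>
      rw [List.ofFn_succ, List.foldr_cons, IH (fun i => s i.succ) ]
      rw [← Equiv.sum_comp (Fin.consEquiv fun _ => ZMod 2)
        (fun v => gP s v * ρ * (gP s v)ᴴ), Fintype.sum_prod_type]
      rw [sumZMod2]
      show _ = _ • (∑ w, gP s (Fin.cons 0 w) * ρ * (gP s (Fin.cons 0 w))ᴴ
        + ∑ w, gP s (Fin.cons 1 w) * ρ * (gP s (Fin.cons 1 w))ᴴ)
      simp only [gP_cons, ZMod.val_zero, pow_zero, one_mul,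
        show ((1 : ZMod 2)).val = 1 from rfl, pow_one, pauliProj]
      simp only [Matrix.smul_mul, Matrix.mul_smul, Finset.mul_sum, Finset.sum_mul,
        smul_smul, conjTranspose_mul, Matrix.mul_assoc, smul_add, Finset.smul_sum]
      rw [pow_succ]
      congr 1
      · ring_nf
      · ring_nf

lemma gP_zero {d k : ℕ} (s : Fin k → Matrix (Fin d) (Fin d) ℂ) :
    gP s 0 = 1 := by
  simp [gP]

lemma gP_succ {d k : ℕ} (s : Fin (k+1) → Matrix (Fin d) (Fin d) ℂ)
    (v : Fin (k+1) → ZMod 2) :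
    gP s v = s 0 ^ (v 0).val * gP (fun i => s i.succ) (fun i => v i.succ) := by
  simp [gP, List.ofFn_succ]

lemma gP_comm {d k : ℕ} (s : Fin k → Matrix (Fin d) (Fin d) ℂ)
    (x : Matrix (Fin d) (Fin d) ℂ) (hx : ∀ i, Commute x (s i))
    (v : Fin k → ZMod 2) : Commute x (gP s v) := by
  apply Commute.list_prod_right
  intro y hy
  rw [List.mem_ofFn] at hy
  obtain ⟨i, rfl⟩ := hy
  exact (hx i).pow_right _

lemma gP_mul {d k : ℕ} (s : Fin k → Matrix (Fin d) (Fin d) ℂ)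
    (hsq : ∀ i, s i * s i = 1) (hcomm : ∀ i j, Commute (s i) (s j))
    (v w : Fin k → ZMod 2) :
    gP s (v + w) = gP s v * gP s w := by
  induction k with
  | zero => simp [gP]
  | succ k IH =>
      have hcases : ∀ a : ZMod 2, a = 0 ∨ a = 1 := by decide
      rw [gP_succ s (v + w), gP_succ s v, gP_succ s w]
      have htail : (fun i : Fin k => (v + w) i.succ)
          = (fun i => v i.succ) + (fun i => w i.succ) := rfl
      rw [htail, IH (fun i => s i.succ) (fun i => hsq i.succ)
        (fun i j => hcomm i.succ j.succ)]
      have hpow : s 0 ^ ((v + w) 0).val = s 0 ^ (v 0).val * s 0 ^ (w 0).val := by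
        show s 0 ^ ((v 0 + w 0).val) = _
        rcases hcases (v 0) with h | h <;> rcases hcases (w 0) with h' | h' <;>
          rw [h, h'] <;>
          simp [show ((1 : ZMod 2) + 1) = 0 from rfl,
            show ((1 : ZMod 2)).val = 1 from rfl, hsq 0]
      rw [hpow]
      have hc : Commute (s 0 ^ (w 0).val) (gP (fun i => s i.succ) (fun i => v i.succ)) := by
        apply gP_comm
        intro i
        exact (hcomm 0 i.succ).pow_left _
      rw [mul_assoc, mul_assoc, ← mul_assoc (s 0 ^ (w 0).val), hc.eq, mul_assoc]

lemma gP_single {d k : ℕ} (s : Fin k → Matrix (Fin d) (Fin d) ℂ) (a : Fin k) :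
    gP s (fun i => if i = a then 1 else 0) = s a := by
  induction k with
  | zero => exact absurd a.2 (by omega)
  | succ k IH =>
      rw [gP_succ]
      rcases Fin.eq_zero_or_eq_succ a with rfl | ⟨j, rfl⟩
      · have h0 : (fun i : Fin k => (if i.succ = (0 : Fin (k+1)) then (1 : ZMod 2) else 0))
            = 0 := by
          funext i; simp [Fin.succ_ne_zero]
        rw [if_pos rfl, h0, gP_zero]
        simp [show ((1 : ZMod 2)).val = 1 from rfl]
      · have h0 : (fun i : Fin k => (if i.succ = j.succ then (1 : ZMod 2) else 0))
            = (fun i => if i = j then 1 else 0) := by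
          funext i
          simp [Fin.succ_inj]
        rw [if_neg (Ne.symm (Fin.succ_ne_zero j)), h0, IH]
        simp

lemma noncommProd_eq_gP {d k : ℕ} (s : Fin k → Matrix (Fin d) (Fin d) ℂ)
    (hsq : ∀ i, s i * s i = 1) (hcomm : ∀ i j, Commute (s i) (s j)) (S : Finset (Fin k)) :
    S.noncommProd s (fun a _ b _ _ => hcomm a b)
      = gP s (fun i => if i ∈ S then 1 else 0) := by
  classical
  induction S using Finset.induction with
  | empty =>
      rw [Finset.noncommProd_empty s (fun a _ b _ _ => hcomm a b)]
      have : (fun i : Fin k => (if i ∈ (∅ : Finset (Fin k)) then (1 : ZMod 2) else 0)) = 0 := by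
        funext i; simp
      rw [this, gP_zero]
  | @insert a S ha IH =>
      rw [Finset.noncommProd_insert_of_notMem _ _ _ (fun a _ b _ _ => hcomm a b) ha, IH]
      have hsplit : (fun i : Fin k => (if i ∈ insert a S then (1 : ZMod 2) else 0))
          = (fun i => if i = a then 1 else 0) + (fun i => if i ∈ S then 1 else 0) := by
        funext i
        by_cases h : i = a
        · subst h
          simp [ha]
        · simp [h, Finset.mem_insert]
      rw [hsplit, gP_mul s hsq hcomm, gP_single]

/-- Composition of the projection channels `Π_{P}` over a finite family `P = s 0, …, s (k-1)`
of commuting Hermitian involutions (phaseless Pauli generators) equals averaging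
`ρ ↦ (1/|⟨M⟩|) Σ_{Q ∈ ⟨M⟩} Q ρ Q†` over the generated (elementary abelian) group `⟨M⟩`,
realized as the set of all subset-products of the generators. -/
theorem stmt3 (n k : ℕ) (s : Fin k → Matrix (Fin (2^n)) (Fin (2^n)) ℂ)
    (hherm : ∀ i, (s i)ᴴ = s i)
    (hsq : ∀ i, s i * s i = 1)
    (hcomm : ∀ i j, Commute (s i) (s j))
    (G : Finset (Matrix (Fin (2^n)) (Fin (2^n)) ℂ))
    (hG : G = Finset.image (fun S : Finset (Fin k) => S.noncommProd s (fun a _ b _ _ => hcomm a b)) Finset.univ) :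
    ∀ ρ : Matrix (Fin (2^n)) (Fin (2^n)) ℂ,
      (List.ofFn s).foldr (fun P σ => pauliProj P σ) ρ
        = (G.card : ℂ)⁻¹ • ∑ Q ∈ G, Q * ρ * Qᴴ := by
  intro ρ
  rw [step1]
  have hcases : ∀ a : ZMod 2, a = 0 ∨ a = 1 := by decide
  have hGg : G = Finset.image (gP s) Finset.univ := by
    rw [hG]
    ext Q
    simp only [Finset.mem_image, Finset.mem_univ, true_and]
    constructor
    · rintro ⟨S, rfl⟩
      exact ⟨fun i => if i ∈ S then 1 else 0, (noncommProd_eq_gP s hsq hcomm S).symm⟩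
    · rintro ⟨v, rfl⟩
      refine ⟨Finset.univ.filter (fun i => v i = 1), ?_⟩
      rw [noncommProd_eq_gP s hsq hcomm]
      have hv : (fun i => if i ∈ Finset.univ.filter (fun i => v i = 1) then (1 : ZMod 2) else 0)
          = v := by
        funext i
        rcases hcases (v i) with h0 | h0 <;> simp [h0]
      rw [hv]
  set c := (Finset.univ.filter (fun v : Fin k → ZMod 2 => gP s v = 1)).card with hc
  have hadd : ∀ v : Fin k → ZMod 2, v + v = 0 := by
    intro v; funext i
    have h : ∀ a : ZMod 2, a + a = 0 := by decide
    exact h (v i)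
  have hfib : ∀ Q ∈ Finset.image (gP s) Finset.univ,
      (Finset.univ.filter (fun v => gP s v = Q)).card = c := by
    intro Q hQ
    obtain ⟨v0, -, rfl⟩ := Finset.mem_image.mp hQ
    rw [hc]
    apply Finset.card_nbij' (fun w => w + v0) (fun u => u + v0)
    · intro w hw
      rw [Finset.mem_coe, Finset.mem_filter] at hw ⊢
      refine ⟨Finset.mem_univ _, ?_⟩
      rw [gP_mul s hsq hcomm, hw.2, ← gP_mul s hsq hcomm, hadd, gP_zero]
    · intro u hu
      rw [Finset.mem_coe, Finset.mem_filter] at hu ⊢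
      refine ⟨Finset.mem_univ _, ?_⟩
      rw [gP_mul s hsq hcomm, hu.2, one_mul]
    · intro w _
      beta_reduce
      rw [add_assoc, hadd, add_zero]
    · intro u _
      beta_reduce
      rw [add_assoc, hadd, add_zero]
  have hcard : (Finset.image (gP s) Finset.univ).card * c = 2^k := by
    have h1 := Finset.card_eq_sum_card_image (gP s) (Finset.univ : Finset (Fin k → ZMod 2))
    rw [Finset.sum_congr rfl hfib, Finset.sum_const, smul_eq_mul] at h1
    rw [← h1, Finset.card_univ]
    simp [Fintype.card_fun]
  rw [Finset.sum_comp (fun Q => Q * ρ * Qᴴ) (gP s)]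
  rw [Finset.sum_congr rfl (fun Q hQ => by rw [hfib Q hQ]), hGg]
  rw [Finset.sum_congr rfl
    (fun Q _ => (Nat.cast_smul_eq_nsmul ℂ c (Q * ρ * Qᴴ)).symm)]
  rw [← Finset.smul_sum, smul_smul]
  congr 1
  have h2 : ((Finset.image (gP s) Finset.univ).card : ℂ) * c = 2^k := by
    exact_mod_cast hcard
  have hne2 : ((2:ℂ)^k) ≠ 0 := pow_ne_zero _ two_ne_zero
  have hne : ((Finset.image (gP s) Finset.univ).card : ℂ) ≠ 0 := by
    intro h
    rw [h, zero_mul] at h2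
    exact hne2 h2.symm
  have h3 : ((2:ℂ)^k)⁻¹ * c * ((Finset.image (gP s) Finset.univ).card : ℂ) = 1 := by
    field_simp
    linear_combination h2
  exact eq_inv_of_mul_eq_one_left h3
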